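/- arXiv:1803.08417 — 6 statements merged into one kernel-verified Lean document; each statement's English description precedes it below -/
import Mathlib

section
/- Let N be a finite abelian group and A a group of automorphisms of N acting freely on N ∖ {0}. Then the induced action of A on the character group Hom(N, ℂˣ) is free on the set of nontrivial characters: if a ∈ A and χ is a nontrivial character with χ ∘ a⁻¹ = χ, then a = 1. -/
/-- Free action lemma: if a group `A` of automorphisms of a finite abelian group `N` acts
freely on `N \ {0}`, then the induced action on the character group `Hom(N, ℂˣ)`
(given by `a · χ = χ ∘ a⁻¹`) is free on the set of nontrivial characters. -/
theorem free_action_on_characters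
    {N : Type*} [AddCommGroup N] [Finite N]
    (A : AddSubgroup (AddAut N))
    (hfree : ∀ a ∈ A, ∀ x : N, x ≠ 0 → a x = x → a = 0)
    (a : AddAut N) (ha : a ∈ A)
    (χ : N →+ Additive ℂˣ) (hχ : χ ≠ 0)
    (hfix : ∀ x : N, χ ((-a) x) = χ x) :
    a = 0 := by
  by_contra hne
  -- χ (a x) = χ x for all x
  have hfix' : ∀ x : N, χ (a x) = χ x := by
    intro x
    have := hfix (a x)
    simpa using this.symm
  -- f x = a x - x is injective
  have hinj : Function.Injective (fun x : N => a x - x) := by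
    intro x y hxy
    simp only at hxy
    have h1 : a (x - y) = x - y := by
      have := sub_eq_sub_iff_sub_eq_sub.mp hxy
      simpa [map_sub] using this
    by_contra hxyne
    exact hne (hfree a ha (x - y) (fun h0 => hxyne (sub_eq_zero.mp h0)) h1)
  have hsurj := Finite.surjective_of_injective hinj
  apply hχ
  ext y
  obtain ⟨x, hx⟩ := hsurj y
  simp only at hx
  have : χ y = χ (a x) - χ x := by rw [← hx, map_sub]
  rw [this, hfix' x, sub_self]
  rfl
end

section
/- Let G be a finite group with an irreducible complex representation V of degree d strictly exceeding the index of every nonabelian subgroup of G. Then for any two noncommuting elements x, y ∈ G, their images in GL(V) do not share a common eigenvector. -/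
/-- If a finite group `G` has an irreducible complex representation `V` whose dimension
strictly exceeds the index of every nonabelian subgroup, then no pair of noncommuting
elements of `G` shares a common eigenvector in `V`. -/
theorem big_irrep_no_common_eigenvector
    {G V : Type*} [Group G] [Finite G] [AddCommGroup V] [Module ℂ V]
    [FiniteDimensional ℂ V]
    (ρ : Representation ℂ G V)
    (hirr : ∀ W : Submodule ℂ V, (∀ (g : G) (v : V), v ∈ W → ρ g v ∈ W) → W = ⊥ ∨ W = ⊤)
    (hbig : ∀ H : Subgroup G, (∃ x ∈ H, ∃ y ∈ H, x * y ≠ y * x) →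
      H.index < Module.finrank ℂ V)
    (x y : G) (hxy : x * y ≠ y * x) :
    ¬∃ v : V, v ≠ 0 ∧ (∃ α : ℂ, ρ x v = α • v) ∧ (∃ β : ℂ, ρ y v = β • v) := by
  classical
  rintro ⟨v, hv, ⟨α, hα⟩, ⟨β, hβ⟩⟩
  -- the set of elements acting on v by a scalar is a subgroup
  have inv_aux : ∀ a : G, (∃ c : ℂ, ρ a v = c • v) → (∃ c : ℂ, ρ a⁻¹ v = c • v) := by
    rintro a ⟨c, hc⟩
    have hc0 : c ≠ 0 := by
      intro h
      apply hv
      have : ρ a⁻¹ (ρ a v) = ρ a⁻¹ 0 := by rw [hc, h, zero_smul, map_zero]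
      simpa [← Module.End.mul_apply, ← map_mul] using this
    refine ⟨c⁻¹, ?_⟩
    have h2 : ρ a⁻¹ (ρ a v) = ρ a⁻¹ (c • v) := by rw [hc]
    have h3 : v = c • ρ a⁻¹ v := by
      simpa [← Module.End.mul_apply, ← map_mul, map_smul] using h2
    rw [eq_comm, inv_smul_eq_iff₀ hc0]
    exact h3
  set K : Subgroup G :=
    { carrier := {g : G | ∃ c : ℂ, ρ g v = c • v}
      one_mem' := ⟨1, by simp⟩
      mul_mem' := by
        rintro a b ⟨c, hc⟩ ⟨d, hd⟩
        refine ⟨c * d, ?_⟩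
        rw [map_mul, Module.End.mul_apply, hd, map_smul, hc, smul_smul, mul_comm]
      inv_mem' := by
        rintro a ha
        exact inv_aux a ha } with hK
  set H : Subgroup G := Subgroup.closure {x, y} with hHdef
  have hHK : H ≤ K := by
    rw [hHdef, Subgroup.closure_le]
    rintro g (rfl | rfl)
    · exact ⟨α, hα⟩
    · exact ⟨β, hβ⟩
  have hxH : x ∈ H := Subgroup.subset_closure (Set.mem_insert _ _)
  have hyH : y ∈ H := Subgroup.subset_closure (Set.mem_insert_of_mem _ rfl)
  have hidx : H.index < Module.finrank ℂ V := hbig H ⟨x, hxH, y, hyH, hxy⟩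
  -- the span of the orbit of v
  set T : Set V := Set.range (fun g : G => ρ g v) with hT
  set W : Submodule ℂ V := Submodule.span ℂ T with hW
  have hWinv : ∀ (g : G) (w : V), w ∈ W → ρ g w ∈ W := by
    intro g w hw
    have hmap : Submodule.map (ρ g) W ≤ W := by
      rw [hW, Submodule.map_span]
      apply Submodule.span_mono
      rintro _ ⟨_, ⟨g', rfl⟩, rfl⟩
      exact ⟨g * g', by simp [map_mul]⟩
    exact hmap ⟨w, hw, rfl⟩
  have hvW : v ∈ W := Submodule.subset_span ⟨1, by simp⟩
  have hWtop : W = ⊤ := by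
    rcases hirr W hWinv with h | h
    · exact absurd (h ▸ hvW) (by simpa using hv)
    · exact h
  -- coset representatives
  haveI : Fintype (G ⧸ H) := Fintype.ofFinite _
  set s : Finset V := Finset.image (fun q : G ⧸ H => ρ q.out v) Finset.univ with hs
  have hTs : T ⊆ (Submodule.span ℂ (s : Set V) : Set V) := by
    rintro _ ⟨g, rfl⟩
    obtain ⟨h, hh⟩ := QuotientGroup.mk_out_eq_mul H g
    have hg : g = ((QuotientGroup.mk g : G ⧸ H).out) * (h : G)⁻¹ := by
      rw [hh]; group
    obtain ⟨c, hc⟩ := hHK ((h⁻¹ : H).2 : ((h⁻¹ : H) : G) ∈ H)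
    have : ρ g v = c • ρ ((QuotientGroup.mk g : G ⧸ H).out) v := by
      conv_lhs => rw [hg]
      rw [map_mul, Module.End.mul_apply]
      rw [show ((h : G)⁻¹) = ((h⁻¹ : H) : G) by simp, hc, map_smul]
    show ρ g v ∈ _
    rw [this]
    exact Submodule.smul_mem _ _ (Submodule.subset_span
      (Finset.mem_coe.mpr (Finset.mem_image.mpr ⟨_, Finset.mem_univ _, rfl⟩)))
  have hspan_top : Submodule.span ℂ (s : Set V) = ⊤ := by
    rw [eq_top_iff, ← hWtop, hW]
    exact Submodule.span_le.mpr hTs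
  have h1 : Module.finrank ℂ V ≤ s.card := by
    have := finrank_span_finset_le_card (R := ℂ) (M := V) s
    rw [Set.finrank, hspan_top, finrank_top] at this
    exact this
  have h2 : s.card ≤ H.index := by
    calc s.card ≤ Finset.univ.card := Finset.card_image_le
    _ = Fintype.card (G ⧸ H) := rfl
    _ = H.index := by rw [Subgroup.index, Nat.card_eq_fintype_card]
  omega
end

section
/- Let p be a prime with p ≡ 1 (mod 4) and let d = (p+1)/2. Then there exists an automorphism A of (ℤ/pℤ)² of order d, and every nonzero power Aᵏ (1 ≤ k ≤ d−1) acts on (ℤ/pℤ)² without nonzero fixed points; equivalently, the cyclic group ⟨A⟩ acts freely on (ℤ/pℤ)² ∖ {0}. -/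
/-- For a prime `p ≡ 1 (mod 4)` and `d = (p+1)/2`, there is an automorphism `A` of
`(ℤ/pℤ)²` of order `d` such that every nonzero power `A^k` (`1 ≤ k ≤ d-1`) has no nonzero
fixed points; i.e. `⟨A⟩` acts freely on `(ℤ/pℤ)² \ {0}`. -/
theorem exists_addAut_order_half_p_add_one_free
    (p : ℕ) (hp : p.Prime) (hmod : p % 4 = 1) (d : ℕ) (hd : d = (p + 1) / 2) :
    ∃ A : AddAut (ZMod p × ZMod p), addOrderOf A = d ∧
      ∀ k : ℕ, 1 ≤ k → k ≤ d - 1 →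
        ∀ x : ZMod p × ZMod p, x ≠ 0 → (k • A) x ≠ x := by
  haveI := Fact.mk hp
  have hp5 : 5 ≤ p := by
    have := hp.two_le; omega
  have hd2 : 2 * d = p + 1 := by omega
  have hd3 : 3 ≤ d := by omega
  set F := GaloisField p 2 with hF
  have hcard : Nat.card F = p ^ 2 := GaloisField.card p 2 two_ne_zero
  have hcardu : Nat.card Fˣ = p ^ 2 - 1 := by rw [Nat.card_units, hcard]
  set N := Nat.card Fˣ with hN
  have hNpos : 0 < N := Nat.card_pos
  have hdvd : d ∣ N := by
    have h1 : N = (p + 1) * (p - 1) := by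
      rw [hcardu, ← Nat.sq_sub_sq]
    rw [h1]
    exact dvd_mul_of_dvd_left ⟨2, by omega⟩ _
  -- find a unit of order d
  obtain ⟨g, hg⟩ := IsCyclic.exists_ofOrder_eq_natCard (α := Fˣ)
  set α : Fˣ := g ^ (N / d) with hα
  have horder : orderOf α = d := by
    rw [hα, orderOf_pow, hg, Nat.gcd_eq_right (Nat.div_dvd_of_dvd hdvd),
      Nat.div_div_self hdvd hNpos.ne']
  -- additive equivalence F ≃+ (ZMod p)²
  let b := Module.finBasisOfFinrankEq (ZMod p) F (GaloisField.finrank p two_ne_zero)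
  let e : F ≃+ ZMod p × ZMod p :=
    (b.equivFun.trans (LinearEquiv.finTwoArrow (ZMod p) (ZMod p))).toAddEquiv
  refine ⟨AddAut.congr e (Multiplicative.toAdd (AddAut.mulLeft α)), ?_, ?_⟩
  · have h1 : addOrderOf (AddAut.congr e (Multiplicative.toAdd (AddAut.mulLeft α)))
        = orderOf (AddAut.mulLeft α) := by
      have h0 := addOrderOf_injective (AddAut.congr e).toAddMonoidHom (AddAut.congr e).injective
        (Multiplicative.toAdd (AddAut.mulLeft α))
      rw [← orderOf_ofAdd_eq_addOrderOf (Multiplicative.toAdd (AddAut.mulLeft α)), ofAdd_toAdd] at h0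
      exact h0
    have hinj : Function.Injective (AddAut.mulLeft (R := F)) := by
      intro u v h
      have : Multiplicative.toAdd (AddAut.mulLeft u) 1
          = Multiplicative.toAdd (AddAut.mulLeft v) 1 := by rw [h]
      replace this : u • (1 : F) = v • (1 : F) := this
      exact Units.ext (by simpa [Units.smul_def] using this)
    rw [h1, orderOf_injective _ hinj, horder]
  · intro k hk1 hk2 x hx hfix
    have hmap : k • (AddAut.congr e (Multiplicative.toAdd (AddAut.mulLeft α)))
        = AddAut.congr e (Multiplicative.toAdd (AddAut.mulLeft (α ^ k))) := by
      rw [← map_nsmul, ← toAdd_pow, ← map_pow]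
    rw [hmap] at hfix
    have hy : e.symm x ≠ 0 := by
      intro h
      apply hx
      have := congrArg e h
      simpa using this
    have hfix' : (Multiplicative.toAdd (AddAut.mulLeft (α ^ k))) (e.symm x) = e.symm x := by
      have h2 := congrArg e.symm hfix
      simp only [AddAut.congr_apply, AddEquiv.trans_apply,
        AddEquiv.symm_apply_apply] at h2
      exact h2
    have heq : (α : F) ^ k * e.symm x = e.symm x := by
      rw [← Units.val_pow_eq_pow_val]
      exact hfix'
    have hα1 : (α : F) ^ k = 1 := by
      have : ((α : F) ^ k - 1) * e.symm x = 0 := by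
        rw [sub_mul, one_mul, heq, sub_self]
      rcases mul_eq_zero.mp this with h | h
      · exact sub_eq_zero.mp h
      · exact absurd h hy
    have : α ^ k = 1 :=
      Units.ext (by rw [Units.val_pow_eq_pow_val, hα1, Units.val_one])
    have hdk : d ∣ k := horder ▸ orderOf_dvd_of_pow_eq_one this
    have := Nat.le_of_dvd (by omega) hdk
    omega
end

section
/- Let A be a commutative ring, R = A[x₁,…,xₙ] with a permutation group G ≤ Sₙ acting by permuting the variables, and let B be any commutative A-algebra. Then taking invariants commutes with base change: (B ⊗_A R)^G = B ⊗_A R^G. -/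
open scoped TensorProduct

/-- The `A`-submodule of `G`-invariant polynomials in `A[x₁,…,xₙ]`, where the permutation
group `G ≤ Sₙ` acts by permuting the variables. -/
def invSubmodule {A : Type*} [CommRing A] {n : ℕ} (G : Subgroup (Equiv.Perm (Fin n))) :
    Submodule A (MvPolynomial (Fin n) A) where
  carrier := {p | ∀ g ∈ G, MvPolynomial.rename (g : Equiv.Perm (Fin n)) p = p}
  add_mem' := fun ha hb g hg => by rw [map_add, ha g hg, hb g hg]
  zero_mem' := fun g hg => by rw [map_zero]
  smul_mem' := fun c p hp g hg => by
    rw [Algebra.smul_def, map_mul, AlgHom.commutes, hp g hg, ← Algebra.smul_def]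

namespace InvBaseChangeAux

open MvPolynomial Finsupp

variable {A B : Type*} [CommRing A] [CommRing B] [Algebra A B] {n : ℕ}

/-- The action of a permutation of the variables on exponent vectors. -/
def act (g : Equiv.Perm (Fin n)) : (Fin n →₀ ℕ) ≃ (Fin n →₀ ℕ) :=
  Finsupp.equivCongrLeft g

lemma act_eq_mapDomain (g : Equiv.Perm (Fin n)) (d : Fin n →₀ ℕ) :
    act g d = Finsupp.mapDomain g d := by
  rw [act, equivCongrLeft_apply, equivMapDomain_eq_mapDomain]

lemma act_mul (g h : Equiv.Perm (Fin n)) (d : Fin n →₀ ℕ) :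
    act g (act h d) = act (g * h) d := by
  simp only [act, equivCongrLeft_apply]
  rw [← equivMapDomain_trans]
  rfl

lemma act_one (d : Fin n →₀ ℕ) : act (1 : Equiv.Perm (Fin n)) d = d := by
  simp only [act, equivCongrLeft_apply]
  exact equivMapDomain_refl d

/-- The linear equivalence `B ⊗[A] A[x₁,…,xₙ] ≃ ((Fin n →₀ ℕ) →₀ B)` coming from the
monomial basis. -/
noncomputable def phi (A B : Type*) [CommRing A] [CommRing B] [Algebra A B] (n : ℕ) :
    B ⊗[A] MvPolynomial (Fin n) A ≃ₗ[A] ((Fin n →₀ ℕ) →₀ B) :=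
  (TensorProduct.congr (LinearEquiv.refl A B) (MvPolynomial.basisMonomials (Fin n) A).repr).trans
    (TensorProduct.finsuppScalarRight A A B (Fin n →₀ ℕ))

lemma phi_tmul (b : B) (p : MvPolynomial (Fin n) A) (d : Fin n →₀ ℕ) :
    phi A B n (b ⊗ₜ p) d = MvPolynomial.coeff d p • b := by
  simp only [phi, LinearEquiv.trans_apply, TensorProduct.congr_tmul, LinearEquiv.refl_apply,
    TensorProduct.finsuppScalarRight_apply_tmul_apply]
  rfl

lemma phi_symm_single (d : Fin n →₀ ℕ) (b : B) :
    (phi A B n).symm (Finsupp.single d b) = b ⊗ₜ[A] MvPolynomial.monomial d 1 := by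
  apply (phi A B n).injective
  rw [LinearEquiv.apply_symm_apply]
  ext e
  rw [phi_tmul, MvPolynomial.coeff_monomial, Finsupp.single_apply]
  split_ifs with h <;> simp

lemma phi_rename (g : Equiv.Perm (Fin n)) (z : B ⊗[A] MvPolynomial (Fin n) A)
    (d : Fin n →₀ ℕ) :
    phi A B n (LinearMap.lTensor B (MvPolynomial.rename (g : Equiv.Perm (Fin n)) :
      MvPolynomial (Fin n) A →ₐ[A] MvPolynomial (Fin n) A).toLinearMap z) (act g d)
      = phi A B n z d := by
  induction z using TensorProduct.induction_on with
  | zero => simp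
  | tmul b p =>
    rw [LinearMap.lTensor_tmul, AlgHom.toLinearMap_apply, phi_tmul, phi_tmul,
      act_eq_mapDomain, MvPolynomial.coeff_rename_mapDomain g g.injective]
  | add x y hx hy => rw [map_add, map_add, map_add, Finsupp.add_apply, Finsupp.add_apply, hx, hy]

lemma key (G : Subgroup (Equiv.Perm (Fin n))) :
    ∀ (N : ℕ) (f : (Fin n →₀ ℕ) →₀ B), f.support.card ≤ N →
      (∀ g ∈ G, ∀ d, f (act g d) = f d) →
      (phi A B n).symm f ∈
        LinearMap.range (LinearMap.lTensor B (invSubmodule (A := A) G).subtype) := by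
  classical
  intro N
  induction N with
  | zero =>
    intro f hcard _
    have : f = 0 := by
      rw [← Finsupp.support_eq_empty, ← Finset.card_eq_zero]
      omega
    rw [this, map_zero]
    exact Submodule.zero_mem _
  | succ N ih =>
    intro f hcard hf
    by_cases hf0 : f = 0
    · rw [hf0, map_zero]; exact Submodule.zero_mem _
    obtain ⟨d, hd⟩ := Finsupp.support_nonempty_iff.mpr hf0
    -- the (finite) orbit of `d` under `G`; it is contained in the support of `f`
    set O : Finset (Fin n →₀ ℕ) :=
      f.support.filter (fun e => ∃ g ∈ G, act g d = e) with hO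
    have hdO : d ∈ O := by
      rw [hO, Finset.mem_filter]
      exact ⟨hd, 1, G.one_mem, act_one d⟩
    have hfO : ∀ e ∈ O, f e = f d := by
      intro e he
      rw [hO, Finset.mem_filter] at he
      obtain ⟨-, g, hg, rfl⟩ := he
      exact hf g hg d
    have hOact : ∀ g ∈ G, ∀ e ∈ O, act g e ∈ O := by
      intro g hg e he
      have hfe : f e = f d := hfO e he
      rw [hO, Finset.mem_filter] at he ⊢
      obtain ⟨hes, h, hh, rfl⟩ := he
      refine ⟨?_, g * h, G.mul_mem hg hh, (act_mul g h d).symm⟩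
      rw [Finsupp.mem_support_iff, hf g hg, hfe]
      rw [Finsupp.mem_support_iff] at hd
      exact hd
    have hOiff : ∀ g ∈ G, ∀ e, act g e ∈ O ↔ e ∈ O := by
      intro g hg e
      constructor
      · intro h
        have := hOact g⁻¹ (inv_mem hg) _ h
        rwa [act_mul, inv_mul_cancel, act_one] at this
      · exact hOact g hg e
    -- the orbit sum, an invariant polynomial
    set p : MvPolynomial (Fin n) A := ∑ e ∈ O, MvPolynomial.monomial e 1 with hp
    have hpinv : p ∈ invSubmodule (A := A) G := by
      intro g hg
      rw [hp, map_sum]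
      simp_rw [MvPolynomial.rename_monomial, ← act_eq_mapDomain]
      exact Finset.sum_equiv (act g) (fun e => (hOiff g hg e).symm) (fun e _ => rfl)
    -- the part of `f` supported on the orbit
    set F : (Fin n →₀ ℕ) →₀ B := ∑ e ∈ O, Finsupp.single e (f d) with hFdef
    have hFapply : ∀ e, F e = if e ∈ O then f d else 0 := by
      intro e
      rw [hFdef, Finset.sum_apply']
      simp [Finsupp.single_apply]
    have hFrange : (phi A B n).symm F ∈
        LinearMap.range (LinearMap.lTensor B (invSubmodule (A := A) G).subtype) := by
      refine ⟨f d ⊗ₜ ⟨p, hpinv⟩, ?_⟩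
      rw [LinearMap.lTensor_tmul, Submodule.coe_subtype, hFdef, map_sum]
      simp_rw [phi_symm_single]
      rw [← TensorProduct.tmul_sum]
    -- the rest of `f`
    set f' : (Fin n →₀ ℕ) →₀ B := f - F with hf'def
    have hf'apply : ∀ e, f' e = if e ∈ O then 0 else f e := by
      intro e
      rw [hf'def, Finsupp.sub_apply, hFapply e]
      split_ifs with h
      · rw [hfO e h, sub_self]
      · rw [sub_zero]
    have hs : f'.support ⊆ f.support.erase d := by
      intro e he
      rw [Finsupp.mem_support_iff, hf'apply] at he
      split_ifs at he with h
      · exact absurd rfl he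
      · exact Finset.mem_erase.mpr ⟨fun h' => h (h' ▸ hdO), Finsupp.mem_support_iff.mpr he⟩
    have hcard' : f'.support.card ≤ N := by
      have h1 := Finset.card_le_card hs
      have h2 := Finset.card_erase_of_mem hd
      omega
    have hf' : ∀ g ∈ G, ∀ e, f' (act g e) = f' e := by
      intro g hg e
      rw [hf'apply, hf'apply]
      simp only [hf g hg e, hOiff g hg e]
    have hmem' := ih f' hcard' hf'
    have : f = f' + F := by rw [hf'def, sub_add_cancel]
    rw [this, map_add]
    exact Submodule.add_mem _ hmem' hFrange

end InvBaseChangeAux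

/-- Taking invariants of a permutation action commutes with base change:
`(B ⊗_A R)^G = B ⊗_A R^G`, where `R = A[x₁,…,xₙ]` and `G ≤ Sₙ` permutes the variables. -/
theorem invariants_commute_with_base_change
    {A B : Type*} [CommRing A] [CommRing B] [Algebra A B] {n : ℕ}
    (G : Subgroup (Equiv.Perm (Fin n))) (z : B ⊗[A] MvPolynomial (Fin n) A) :
    (∀ g ∈ G,
        LinearMap.lTensor B (MvPolynomial.rename (g : Equiv.Perm (Fin n)) :
          MvPolynomial (Fin n) A →ₐ[A] MvPolynomial (Fin n) A).toLinearMap z = z) ↔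
      z ∈ LinearMap.range (LinearMap.lTensor B (invSubmodule (A := A) G).subtype) := by
  constructor
  · intro hz
    have hinv : ∀ g ∈ G, ∀ d, (InvBaseChangeAux.phi A B n z) (InvBaseChangeAux.act g d) =
        (InvBaseChangeAux.phi A B n z) d := by
      intro g hg d
      have h := InvBaseChangeAux.phi_rename g z d
      rwa [hz g hg] at h
    have h := InvBaseChangeAux.key (A := A) (B := B) G (InvBaseChangeAux.phi A B n z).support.card
      (InvBaseChangeAux.phi A B n z) le_rfl hinv
    rwa [LinearEquiv.symm_apply_apply] at h
  · rintro ⟨y, rfl⟩ g hg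
    rw [← LinearMap.lTensor_comp_apply]
    have hcomp : (MvPolynomial.rename (g : Equiv.Perm (Fin n)) :
        MvPolynomial (Fin n) A →ₐ[A] MvPolynomial (Fin n) A).toLinearMap ∘ₗ
        (invSubmodule (A := A) G).subtype = (invSubmodule (A := A) G).subtype :=
      LinearMap.ext fun p => p.2 g hg
    rw [hcomp]
end

section
/- Let R be a noetherian commutative ring. Then Spec R is connected if and only if the bipartite 'containment graph' Γ_R is connected, where Γ_R has as vertices the minimal primes and the maximal ideals of R, with an edge between a minimal prime 𝔭 and a maximal ideal 𝔪 whenever 𝔭 ⊆ 𝔪. -/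
/-- The bipartite containment graph of a commutative ring `R`: vertices are the minimal
primes and the maximal ideals, with an edge between a minimal prime `𝔭` and a maximal
ideal `𝔪` whenever `𝔭 ⊆ 𝔪`. -/
def containmentGraph (R : Type*) [CommRing R] :
    SimpleGraph ({p : Ideal R // p ∈ minimalPrimes R} ⊕ {m : Ideal R // m.IsMaximal}) where
  Adj a b :=
    (∃ p m, a = Sum.inl p ∧ b = Sum.inr m ∧ p.1 ≤ m.1) ∨
    (∃ p m, a = Sum.inr m ∧ b = Sum.inl p ∧ p.1 ≤ m.1)
  symm := by
    constructor
    rintro a b (⟨p, m, h1, h2, h3⟩ | ⟨p, m, h1, h2, h3⟩)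
    · exact Or.inr ⟨p, m, h2, h1, h3⟩
    · exact Or.inl ⟨p, m, h2, h1, h3⟩
  loopless := by
    constructor
    rintro a (⟨p, m, rfl, h2, -⟩ | ⟨p, m, rfl, h2, -⟩) <;> simp at h2

open PrimeSpectrum in
/-- If `x.asIdeal ≤ y.asIdeal` then `x` and `y` lie in the same connected component. -/
private lemma CG.comp_eq_of_le {R : Type*} [CommRing R] {x y : PrimeSpectrum R}
    (h : x.asIdeal ≤ y.asIdeal) : connectedComponent x = connectedComponent y := by
  have hc : IsConnected (closure ({x} : Set (PrimeSpectrum R))) :=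
    isIrreducible_singleton.closure.isConnected
  have hx : x ∈ closure ({x} : Set (PrimeSpectrum R)) := subset_closure rfl
  have hy : y ∈ closure ({x} : Set (PrimeSpectrum R)) := by
    rw [PrimeSpectrum.closure_singleton, PrimeSpectrum.mem_zeroLocus]
    exact h
  exact connectedComponent_eq (hc.subset_connectedComponent hx hy)

/-- The canonical point of `Spec R` associated to a vertex of the containment graph. -/
private def CG.toPoint {R : Type*} [CommRing R] :
    ({p : Ideal R // p ∈ minimalPrimes R} ⊕ {m : Ideal R // m.IsMaximal}) →
      PrimeSpectrum R
  | Sum.inl p => ⟨p.1, p.2.1.1⟩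
  | Sum.inr m => ⟨m.1, m.2.isPrime⟩

private lemma CG.comp_eq_of_adj {R : Type*} [CommRing R] {a b}
    (h : (containmentGraph R).Adj a b) :
    connectedComponent (CG.toPoint a) = connectedComponent (CG.toPoint b) := by
  rcases h with ⟨p, m, rfl, rfl, hle⟩ | ⟨p, m, rfl, rfl, hle⟩
  · exact CG.comp_eq_of_le hle
  · exact (CG.comp_eq_of_le hle).symm

private lemma CG.comp_eq_of_reachable {R : Type*} [CommRing R] {a b}
    (h : (containmentGraph R).Reachable a b) :
    connectedComponent (CG.toPoint a) = connectedComponent (CG.toPoint b) := by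
  obtain ⟨w⟩ := h
  induction w with
  | nil => rfl
  | cons h _ ih => exact (CG.comp_eq_of_adj h).trans ih

/-- For a noetherian commutative ring `R`, the prime spectrum of `R` is connected if and
only if the bipartite containment graph on (minimal primes) ∪ (maximal ideals) is
connected. -/
theorem connectedSpace_iff_containmentGraph_connected
    (R : Type*) [CommRing R] [IsNoetherianRing R] :
    ConnectedSpace (PrimeSpectrum R) ↔ (containmentGraph R).Connected := by
  constructor
  · intro hspec
    -- Spec connected → graph connected
    obtain ⟨x⟩ : Nonempty (PrimeSpectrum R) := hspec.toNonempty
    obtain ⟨m, hm, hxm⟩ := x.asIdeal.exists_le_maximal x.isPrime.ne_top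
    haveI : Nonempty ({p : Ideal R // p ∈ minimalPrimes R} ⊕ {m : Ideal R // m.IsMaximal}) :=
      ⟨Sum.inr ⟨m, hm⟩⟩
    refine SimpleGraph.Connected.mk ?_
    -- every vertex is reachable from `inl` of some minimal prime
    have step : ∀ a, ∃ (p : {p : Ideal R // p ∈ minimalPrimes R}),
        (containmentGraph R).Reachable a (Sum.inl p) := by
      rintro (p | m)
      · exact ⟨p, SimpleGraph.Reachable.refl _⟩
      · haveI := m.2.isPrime
        obtain ⟨p, hp, hpm⟩ := Ideal.exists_minimalPrimes_le
          (I := (⊥ : Ideal R)) (J := m.1) bot_le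
        exact ⟨⟨p, hp⟩, SimpleGraph.Adj.reachable
          (Or.inr ⟨⟨p, hp⟩, m, rfl, rfl, hpm⟩)⟩
    -- it suffices to connect any two minimal primes
    suffices key : ∀ p q : {p : Ideal R // p ∈ minimalPrimes R},
        (containmentGraph R).Reachable (Sum.inl p) (Sum.inl q) by
      intro a b
      obtain ⟨p, hpa⟩ := step a
      obtain ⟨q, hqb⟩ := step b
      exact (hpa.trans (key p q)).trans hqb.symm
    intro p q
    by_contra hnr
    -- the set of minimal primes reachable from `p`
    set S : Set (Ideal R) := {r | ∃ h : r ∈ minimalPrimes R,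
      (containmentGraph R).Reachable (Sum.inl p) (Sum.inl ⟨r, h⟩)} with hS
    have hSsub : S ⊆ minimalPrimes R := fun r hr => hr.1
    have hfin := minimalPrimes.finite_of_isNoetherianRing R
    set A : Set (PrimeSpectrum R) := ⋃ r ∈ S, PrimeSpectrum.zeroLocus (r : Set R) with hA
    set B : Set (PrimeSpectrum R) :=
      ⋃ r ∈ minimalPrimes R \ S, PrimeSpectrum.zeroLocus (r : Set R) with hB
    have hAclosed : IsClosed A :=
      Set.Finite.isClosed_biUnion (hfin.subset hSsub)
        (fun r _ => PrimeSpectrum.isClosed_zeroLocus _)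
    have hBclosed : IsClosed B :=
      Set.Finite.isClosed_biUnion (hfin.subset Set.diff_subset)
        (fun r _ => PrimeSpectrum.isClosed_zeroLocus _)
    -- A and B cover Spec R
    have hcover : A ∪ B = Set.univ := by
      apply Set.eq_univ_of_forall
      intro x
      haveI := x.isPrime
      obtain ⟨r, hr, hrx⟩ := Ideal.exists_minimalPrimes_le
        (I := (⊥ : Ideal R)) (J := x.asIdeal) bot_le
      have hmem : x ∈ PrimeSpectrum.zeroLocus (r : Set R) :=
        (PrimeSpectrum.mem_zeroLocus _ _).mpr (SetLike.coe_subset_coe.mpr hrx)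
      by_cases hrS : r ∈ S
      · exact Or.inl (Set.mem_biUnion hrS hmem)
      · exact Or.inr (Set.mem_biUnion ⟨hr, hrS⟩ hmem)
    -- A and B are disjoint
    have hdisj : A ∩ B = ∅ := by
      rw [Set.eq_empty_iff_forall_notMem]
      rintro x ⟨hxA, hxB⟩
      simp only [hA, hB, Set.mem_iUnion] at hxA hxB
      obtain ⟨r1, hr1S, hxr1⟩ := hxA
      obtain ⟨r2, ⟨hr2, hr2S⟩, hxr2⟩ := hxB
      obtain ⟨m', hm', hxm'⟩ := x.asIdeal.exists_le_maximal x.isPrime.ne_top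
      obtain ⟨hr1, hreach⟩ := hr1S
      apply hr2S
      have h1le : r1 ≤ x.asIdeal :=
        SetLike.coe_subset_coe.mp ((PrimeSpectrum.mem_zeroLocus _ _).mp hxr1)
      have h2le : r2 ≤ x.asIdeal :=
        SetLike.coe_subset_coe.mp ((PrimeSpectrum.mem_zeroLocus _ _).mp hxr2)
      refine ⟨hr2, hreach.trans (SimpleGraph.Reachable.trans
        (v := Sum.inr ⟨m', hm'⟩) ?_ ?_)⟩
      · exact SimpleGraph.Adj.reachable
          (Or.inl ⟨⟨r1, hr1⟩, ⟨m', hm'⟩, rfl, rfl, h1le.trans hxm'⟩)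
      · exact SimpleGraph.Adj.reachable
          (Or.inr ⟨⟨r2, hr2⟩, ⟨m', hm'⟩, rfl, rfl, h2le.trans hxm'⟩)
    -- A is nonempty (contains the point p)
    have hpS : p.1 ∈ S := ⟨p.2, by exact SimpleGraph.Reachable.refl _⟩
    have hAne : A.Nonempty :=
      ⟨⟨p.1, p.2.1.1⟩, Set.mem_biUnion hpS
        ((PrimeSpectrum.mem_zeroLocus _ _).mpr (SetLike.coe_subset_coe.mpr le_rfl))⟩
    have hBne : B.Nonempty := by
      refine ⟨⟨q.1, q.2.1.1⟩, Set.mem_biUnion ⟨q.2, fun hqS => ?_⟩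
        ((PrimeSpectrum.mem_zeroLocus _ _).mpr (SetLike.coe_subset_coe.mpr le_rfl))⟩
      exact hnr hqS.2
    -- contradiction with connectedness
    have hclopen : IsClopen A := by
      constructor
      · exact hAclosed
      · rw [← isClosed_compl_iff]
        have : Aᶜ = B := by
          apply Set.Subset.antisymm
          · intro x hx
            rcases (hcover ▸ Set.mem_univ x : x ∈ A ∪ B) with h | h
            · exact absurd h hx
            · exact h
          · intro x hx hxA
            exact (Set.eq_empty_iff_forall_notMem.mp hdisj x) ⟨hxA, hx⟩
        rw [this]
        exact hBclosed
    rcases (isClopen_iff.mp hclopen) with h | h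
    · exact absurd h (Set.nonempty_iff_ne_empty.mp hAne)
    · obtain ⟨y, hy⟩ := hBne
      have : y ∈ A := h ▸ Set.mem_univ y
      exact (Set.eq_empty_iff_forall_notMem.mp hdisj y) ⟨this, hy⟩
  · intro hgraph
    -- graph connected → Spec connected
    obtain ⟨v0⟩ := hgraph.nonempty
    rw [connectedSpace_iff_connectedComponent]
    refine ⟨CG.toPoint v0, Set.eq_univ_of_forall fun y => ?_⟩
    haveI := y.isPrime
    obtain ⟨r, hr, hry⟩ := Ideal.exists_minimalPrimes_le
      (I := (⊥ : Ideal R)) (J := y.asIdeal) bot_le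
    have h1 : connectedComponent (CG.toPoint v0)
        = connectedComponent (CG.toPoint (Sum.inl ⟨r, hr⟩)) :=
      CG.comp_eq_of_reachable (hgraph.preconnected v0 (Sum.inl ⟨r, hr⟩))
    have h2 : connectedComponent (CG.toPoint (Sum.inl (⟨r, hr⟩ :
        {p : Ideal R // p ∈ minimalPrimes R}))) = connectedComponent y :=
      CG.comp_eq_of_le hry
    rw [h1, h2]
    exact mem_connectedComponent
end

section
/- Let 𝓜 be a positive archimedean commutative monoid, R an 𝓜-graded commutative ring, and M an 𝓜-graded R-module. If R₊M = M, where R₊ = ⊕_{a≠0} R_a, then M = 0. (Graded Nakayama lemma.) -/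
section Aux

variable {ι M : Type*} [DecidableEq ι] [AddCommGroup M]
  (ℳ : ι → AddSubgroup M) [DirectSum.Decomposition ℳ]

/-- The degree-`c` component of `m`, as an element of `M`, bundled as an additive hom. -/
noncomputable def gradedComponent (c : ι) : M →+ M :=
  ((ℳ c).subtype.comp (DFinsupp.evalAddMonoidHom c)).comp
    (DirectSum.decomposeAddEquiv ℳ).toAddMonoidHom

lemma gradedComponent_apply (c : ι) (m : M) :
    gradedComponent ℳ c m = (DirectSum.decompose ℳ m c : M) := rfl

end Aux

/-- Graded Nakayama lemma: let `𝓜` (here `ι`) be a positive (cancellative, with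
`a + b = 0 → a = 0 ∧ b = 0`) archimedean commutative monoid, `R` an `ι`-graded commutative
ring and `M` an `ι`-graded `R`-module.  If `R₊ M = M`, where `R₊` is the ideal generated by
the components of nonzero degree, then `M = 0`. -/
theorem graded_nakayama
    {ι R M : Type*} [AddCommMonoid ι] [DecidableEq ι]
    [CommRing R] [AddCommGroup M] [Module R M]
    (hcanc : ∀ a b c : ι, a + b = a + c → b = c)
    (hpos : ∀ a b : ι, a + b = 0 → a = 0 ∧ b = 0)
    (harch : ∀ a : ι, ∃ ℓ : ℕ, ∀ l : List ι,
      (∀ x ∈ l, x ≠ 0) → l.length = ℓ → ¬∃ c : ι, l.sum + c = a)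
    (𝒜 : ι → AddSubgroup R) [GradedRing 𝒜]
    (ℳ : ι → AddSubgroup M) [SetLike.GradedSMul 𝒜 ℳ] [DirectSum.Decomposition ℳ]
    (h : (Ideal.span (⋃ a ∈ {a : ι | a ≠ 0}, ((𝒜 a : Set R)))) • (⊤ : Submodule R M) = ⊤) :
    Subsingleton M := by
  classical
  set I : Ideal R := Ideal.span (⋃ a ∈ {a : ι | a ≠ 0}, ((𝒜 a : Set R))) with hI
  -- smul by a homogeneous element
  have hom_smul : ∀ (d c : ι) (s : R), s ∈ 𝒜 d → ∀ w : M,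
      (∀ i, d + i = c → gradedComponent ℳ i w = 0) →
      gradedComponent ℳ c (s • w) = 0 := by
    intro d c s hs w hw
    have hw' : s • w = ∑ i ∈ (DirectSum.decompose ℳ w).support,
        s • (DirectSum.decompose ℳ w i : M) := by
      rw [← Finset.smul_sum, DirectSum.sum_support_decompose]
    rw [hw', map_sum]
    refine Finset.sum_eq_zero fun i _ => ?_
    have hmem : s • (DirectSum.decompose ℳ w i : M) ∈ ℳ (d + i) :=
      SetLike.GradedSMul.smul_mem (A := 𝒜) (B := ℳ) hs (SetLike.coe_mem _)
    by_cases hdi : d + i = c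
    · have : (DirectSum.decompose ℳ w i : M) = 0 := by
        rw [← gradedComponent_apply]; exact hw i hdi
      rw [this, smul_zero, map_zero]
    · rw [gradedComponent_apply]
      exact DirectSum.decompose_of_mem_ne ℳ hmem hdi
  -- smul by a general element
  have gen_smul : ∀ (c : ι) (s : R) (w : M),
      (∀ i, (∃ b, b + i = c) → gradedComponent ℳ i w = 0) →
      gradedComponent ℳ c (s • w) = 0 := by
    intro c s w hw
    have hs' : s • w = ∑ b ∈ (DirectSum.decompose 𝒜 s).support,
        (DirectSum.decompose 𝒜 s b : R) • w := by
      rw [← Finset.sum_smul, DirectSum.sum_support_decompose]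
    rw [hs', map_sum]
    refine Finset.sum_eq_zero fun b _ => ?_
    exact hom_smul b c _ (SetLike.coe_mem _) w fun i hbi => hw i ⟨b, hbi⟩
  -- main induction
  have key : ∀ n : ℕ, ∀ a : ι, (∀ l : List ι,
      (∀ x ∈ l, x ≠ 0) → l.length = n → ¬∃ c : ι, l.sum + c = a) →
      ∀ m : M, gradedComponent ℳ a m = 0 := by
    intro n
    induction n with
    | zero =>
      intro a ha m
      exact absurd ⟨a, by simp⟩ (ha [] (by simp) rfl)
    | succ n ih =>
      intro a ha m
      have hm : m ∈ I • (⊤ : Submodule R M) := by rw [h]; trivial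
      -- strengthened motive
      have main : ∀ c : ι, (∃ b, b + c = a) → gradedComponent ℳ c m = 0 := by
        refine Submodule.smul_induction_on (p := fun m =>
          ∀ c : ι, (∃ b, b + c = a) → gradedComponent ℳ c m = 0) hm ?_ ?_
        · intro r hr x _
          refine Submodule.span_induction (p := fun r _ => ∀ (w : M) (c : ι),
            (∃ b, b + c = a) → gradedComponent ℳ c (r • w) = 0) ?_ ?_ ?_ ?_ hr x
          · -- generators
            intro y hy w c hc
            simp only [Set.mem_iUnion, Set.mem_setOf_eq, SetLike.mem_coe] at hy
            obtain ⟨d, hd, hyd⟩ := hy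
            obtain ⟨b, hb⟩ := hc
            refine hom_smul d c y hyd w fun i hdi => ?_
            refine ih i ?_ w
            intro l hl hlen ⟨e, he⟩
            refine ha (d :: l) ?_ (by simp [hlen]) ⟨e + b, ?_⟩
            · intro x hx
              rcases List.mem_cons.mp hx with rfl | hx
              · exact hd
              · exact hl x hx
            · have : (d :: l).sum + (e + b) = d + (l.sum + e) + b := by
                simp [List.sum_cons, add_assoc]
              rw [this, he, hdi, add_comm c b, hb]
          · intro w c _
            rw [zero_smul, map_zero]
          · intro x y _ _ hx hy w c hc
            rw [add_smul, map_add, hx w c hc, hy w c hc, add_zero]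
          · intro s r _ hrw w c hc
            have : (s • r) • w = s • (r • w) := by rw [smul_eq_mul, mul_smul]
            rw [this]
            refine gen_smul c s (r • w) fun i hi => ?_
            obtain ⟨b', hb'⟩ := hi
            obtain ⟨b, hb⟩ := hc
            exact hrw w i ⟨b + b', by rw [add_assoc, hb', hb]⟩
        · intro x y hx hy c hc
          rw [map_add, hx c hc, hy c hc, add_zero]
      exact main a ⟨0, zero_add a⟩
  -- conclude
  refine subsingleton_of_forall_eq 0 fun m => ?_
  have : m = ∑ i ∈ (DirectSum.decompose ℳ m).support, (DirectSum.decompose ℳ m i : M) :=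
    (DirectSum.sum_support_decompose ℳ m).symm
  rw [this]
  refine Finset.sum_eq_zero fun i _ => ?_
  obtain ⟨ℓ, hℓ⟩ := harch i
  rw [← gradedComponent_apply]
  exact key ℓ i hℓ m
end
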